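/- (Inexact power method.) Let M ∈ R^{d×d} be a symmetric positive semidefinite matrix with eigenvalues λ₁ ≥ ⋯ ≥ λ_d > 0 and corresponding orthonormal eigenvectors u₁, …, u_d. Define Γ(M,t) = (2/λ_d^t)·t if λ₁ = 1 and Γ(M,t) = (2/λ_d^t)·(λ₁^t − 1)/(λ₁ − 1) if λ₁ ≠ 1. Let w₀ be a unit vector with (w₀ᵀ u₁)² ≥ α for some α > 0, fix ε ∈ (0,1) and κ ≥ 1, fix t ≥ ⌈(κ/2)·log(4/(αε))⌉, and let ŵ₀ = w₀ and ŵ_s (1 ≤ s ≤ t, ŵ_s ≠ 0) be any sequence with ‖ŵ_s − M ŵ_{s−1}‖ ≤ ε/(4Γ(M,t)) for each s. Then the normalized iterate w_t = ŵ_t/‖ŵ_t‖ satisfies Σ_{i ∈ [d] : λ_i ≤ (1 − 1/κ)λ₁} (w_tᵀ u_i)² ≤ ε and w_tᵀ M w_t ≥ (1 − 1/κ − ε) λ₁. -/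

import Mathlib

open Matrix Finset

/-- the Euclidean norm of a real vector -/
noncomputable def evnorm {ι : Type*} [Fintype ι] (v : ι → ℝ) : ℝ := Real.sqrt (∑ i, v i ^ 2)

/-- the Euclidean dot product of two real vectors -/
def vdot {ι : Type*} [Fintype ι] (u v : ι → ℝ) : ℝ := ∑ i, u i * v i

open Classical in
/-- `Γ(M,t)` expressed through the largest eigenvalue `l1 = λ₁` and
the smallest eigenvalue `ld = λ_d` of `M`. -/
noncomputable def Gamma (l1 ld : ℝ) (t : ℕ) : ℝ :=
  if l1 = 1 then 2 / ld ^ t * t else 2 / ld ^ t * ((l1 ^ t - 1) / (l1 - 1))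

lemma evnorm_eq_norm {ι : Type*} [Fintype ι] (v : ι → ℝ) :
    evnorm v = ‖(WithLp.equiv 2 (ι → ℝ)).symm v‖ := by
  rw [EuclideanSpace.norm_eq]
  simp [evnorm, sq_abs]

lemma evnorm_nonneg {ι : Type*} [Fintype ι] (v : ι → ℝ) : 0 ≤ evnorm v := Real.sqrt_nonneg _

lemma evnorm_sq {ι : Type*} [Fintype ι] (v : ι → ℝ) : evnorm v ^ 2 = ∑ i, v i ^ 2 :=
  Real.sq_sqrt (by positivity)

lemma evnorm_add_le {ι : Type*} [Fintype ι] (a b : ι → ℝ) :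
    evnorm (a + b) ≤ evnorm a + evnorm b := by
  simp only [evnorm_eq_norm]
  rw [show (WithLp.equiv 2 (ι → ℝ)).symm (a + b) = (WithLp.equiv 2 (ι → ℝ)).symm a + (WithLp.equiv 2 (ι → ℝ)).symm b from rfl]
  exact norm_add_le _ _

lemma evnorm_smul {ι : Type*} [Fintype ι] (r : ℝ) (v : ι → ℝ) :
    evnorm (r • v) = |r| * evnorm v := by
  simp only [evnorm_eq_norm]
  rw [show (WithLp.equiv 2 (ι → ℝ)).symm (r • v) = r • (WithLp.equiv 2 (ι → ℝ)).symm v from rfl]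
  rw [norm_smul, Real.norm_eq_abs]

lemma evnorm_pos {ι : Type*} [Fintype ι] {v : ι → ℝ} (hv : v ≠ 0) : 0 < evnorm v := by
  rw [evnorm_eq_norm, norm_pos_iff]
  simpa using hv

lemma evnorm_neg {ι : Type*} [Fintype ι] (v : ι → ℝ) : evnorm (-v) = evnorm v := by
  simp [evnorm]

lemma le_of_sq_le_sq' {x y : ℝ} (hy : 0 ≤ y) (h : x ^ 2 ≤ y ^ 2) (hx : 0 ≤ x) : x ≤ y := by
  nlinarith

lemma parseval {d : ℕ} (u : Fin d → Fin d → ℝ)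
    (horth : ∀ i i', vdot (u i) (u i') = if i = i' then (1 : ℝ) else 0)
    (v w : Fin d → ℝ) :
    vdot v w = ∑ i, vdot v (u i) * vdot w (u i) := by
  set U : Matrix (Fin d) (Fin d) ℝ := Matrix.of u with hU
  have h1 : U * Uᵀ = 1 := by
    ext i i'
    have := horth i i'
    simpa [Matrix.mul_apply, Matrix.one_apply, vdot, hU] using this
  have h2 : Uᵀ * U = 1 := mul_eq_one_comm.mp h1
  have hcoord : ∀ (x : Fin d → ℝ) i, vdot x (u i) = U.mulVec x i := by
    intro x i
    simp [vdot, Matrix.mulVec, dotProduct, hU, mul_comm]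
  calc vdot v w = v ⬝ᵥ w := rfl
    _ = v ⬝ᵥ (Uᵀ * U).mulVec w := by rw [h2]; simp
    _ = v ⬝ᵥ Uᵀ.mulVec (U.mulVec w) := by rw [Matrix.mulVec_mulVec]
    _ = U.mulVec v ⬝ᵥ U.mulVec w := by
        rw [Matrix.dotProduct_mulVec, Matrix.vecMul_transpose]
    _ = ∑ i, vdot v (u i) * vdot w (u i) := by
        simp [dotProduct, hcoord]

set_option maxHeartbeats 1000000 in
/-- **inexact power method.** For a symmetric PSD matrix `M` with eigenvalues
`λ₁ ≥ ⋯ ≥ λ_d > 0`, a unit start `w₀` with `(w₀ᵀu₁)² ≥ α > 0`, and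
`t ≥ ⌈(κ/2)·log(4/(αε))⌉`, any inexact power sequence with per-step error `ε/(4Γ(M,t))`
satisfies, for the normalized iterate `w_t = ŵ_t/‖ŵ_t‖`,
`Σ_{i : λᵢ ≤ (1−1/κ)λ₁} (w_tᵀuᵢ)² ≤ ε` and `w_tᵀ M w_t ≥ (1 − 1/κ − ε)λ₁`. -/
theorem inexact_power_method {d : ℕ} (hd : 0 < d)
    (M : Matrix (Fin d) (Fin d) ℝ) (hM : M.IsSymm)
    (u : Fin d → Fin d → ℝ) (lam : Fin d → ℝ)
    (horth : ∀ i i', vdot (u i) (u i') = if i = i' then (1 : ℝ) else 0)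
    (heig : ∀ i, M.mulVec (u i) = lam i • u i)
    (hsorted : ∀ i i' : Fin d, i ≤ i' → lam i' ≤ lam i)
    (hpos : ∀ i, 0 < lam i)
    (α : ℝ) (hα : 0 < α)
    (w₀ : Fin d → ℝ) (hw₀ : evnorm w₀ = 1)
    (hinit : α ≤ (vdot w₀ (u ⟨0, hd⟩)) ^ 2)
    (ε κ : ℝ) (hε₀ : 0 < ε) (hε₁ : ε < 1) (hκ : 1 ≤ κ)
    (t : ℕ) (ht : (⌈κ / 2 * Real.log (4 / (α * ε))⌉ : ℝ) ≤ (t : ℝ))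
    (what : ℕ → Fin d → ℝ)
    (hhat₀ : what 0 = w₀)
    (hhat : ∀ s : ℕ, s < t →
      evnorm (what (s + 1) - M.mulVec (what s))
        ≤ ε / (4 * Gamma (lam ⟨0, hd⟩) (lam ⟨d - 1, by omega⟩) t))
    (hne : ∀ s : ℕ, s ≤ t → what s ≠ 0) :
    (∑ i ∈ Finset.univ.filter (fun i => lam i ≤ (1 - 1 / κ) * lam ⟨0, hd⟩),
        (vdot ((evnorm (what t))⁻¹ • what t) (u i)) ^ 2) ≤ ε ∧
    (1 - 1 / κ - ε) * lam ⟨0, hd⟩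
      ≤ vdot ((evnorm (what t))⁻¹ • what t) (M.mulVec ((evnorm (what t))⁻¹ • what t)) := by
  classical
  have hd1 : d - 1 < d := by omega
  set i0 : Fin d := ⟨0, hd⟩ with hi0def
  set idl : Fin d := ⟨d - 1, hd1⟩ with hidldef
  set l1 : ℝ := lam i0 with hl1def
  set ld : ℝ := lam idl with hlddef
  have hhat' : ∀ s : ℕ, s < t →
      evnorm (what (s + 1) - M.mulVec (what s)) ≤ ε / (4 * Gamma l1 ld t) := hhat
  -- basic eigenvalue facts
  have hκ0 : (0:ℝ) < κ := lt_of_lt_of_le one_pos hκ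
  have hκ1 : 1/κ ≤ 1 := by rw [div_le_one hκ0]; exact hκ
  have h1κ : (0:ℝ) ≤ 1 - 1/κ := by linarith
  have hl1pos : 0 < l1 := hpos i0
  have hldpos : 0 < ld := hpos idl
  have hlamle : ∀ i, lam i ≤ l1 := fun i => hsorted i0 i (by show (0:ℕ) ≤ i.val; omega)
  have hldle : ∀ i, ld ≤ lam i := fun i => hsorted i idl (by have := i.isLt; show i.val ≤ d - 1; omega)
  -- Parseval tools
  have hP : ∀ v w : Fin d → ℝ, vdot v w = ∑ i, vdot v (u i) * vdot w (u i) :=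
    parseval u horth
  have hvdot_self : ∀ v : Fin d → ℝ, vdot v v = evnorm v ^ 2 := by
    intro v; rw [evnorm_sq]; simp [vdot, sq]
  have hnormsq : ∀ v : Fin d → ℝ, evnorm v ^ 2 = ∑ i, (vdot v (u i)) ^ 2 := by
    intro v; rw [← hvdot_self, hP v v]; simp [sq]
  have hMcoord : ∀ (v : Fin d → ℝ) i, vdot (M.mulVec v) (u i) = lam i * vdot v (u i) := by
    intro v i
    have h1 : vdot (M.mulVec v) (u i) = M.mulVec v ⬝ᵥ u i := rfl
    rw [h1, dotProduct_comm, Matrix.dotProduct_mulVec, ← Matrix.mulVec_transpose, hM,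
      heig i]
    simp [dotProduct, vdot, Finset.mul_sum]
    ring_nf
    apply Finset.sum_congr rfl
    intro j _; ring
  have hvdot_smul : ∀ (r : ℝ) (x : Fin d → ℝ) i, vdot (r • x) (u i) = r * vdot x (u i) := by
    intro r x i; simp [vdot, Finset.mul_sum, mul_assoc]
  have hvdot_sub : ∀ (x y : Fin d → ℝ) i, vdot (x - y) (u i) = vdot x (u i) - vdot y (u i) := by
    intro x y i; simp [vdot, sub_mul, Finset.sum_sub_distrib]
  have hpowcoord : ∀ (s : ℕ) (v : Fin d → ℝ) i,
      vdot ((M ^ s).mulVec v) (u i) = lam i ^ s * vdot v (u i) := by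
    intro s
    induction s with
    | zero => intro v i; simp [Matrix.one_mulVec]
    | succ n ih =>
      intro v i
      rw [pow_succ', ← Matrix.mulVec_mulVec, hMcoord, ih, pow_succ']
      ring
  -- operator norm bound
  have hMnorm : ∀ v : Fin d → ℝ, evnorm (M.mulVec v) ≤ l1 * evnorm v := by
    intro v
    have h1 : evnorm (M.mulVec v) ^ 2 ≤ (l1 * evnorm v) ^ 2 := by
      rw [hnormsq, mul_pow, hnormsq, Finset.mul_sum]
      apply Finset.sum_le_sum
      intro i _
      rw [hMcoord]
      have h2 := hlamle i
      have h3 := (hpos i).le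
      have h4 : lam i ^ 2 ≤ l1 ^ 2 := pow_le_pow_left₀ h3 h2 2
      calc (lam i * vdot v (u i)) ^ 2 = lam i ^ 2 * vdot v (u i) ^ 2 := by ring
        _ ≤ l1 ^ 2 * vdot v (u i) ^ 2 := mul_le_mul_of_nonneg_right h4 (sq_nonneg _)
    exact le_of_sq_le_sq' (mul_nonneg hl1pos.le (evnorm_nonneg _)) h1 (evnorm_nonneg _)
  -- t ≥ 1 and basic log facts
  have hsum1 : ∑ i, (vdot w₀ (u i)) ^ 2 = 1 := by rw [← hnormsq, hw₀]; norm_num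
  have hα1 : α ≤ 1 := by
    have h1 : (vdot w₀ (u i0)) ^ 2 ≤ ∑ i, (vdot w₀ (u i)) ^ 2 :=
      Finset.single_le_sum (f := fun i => (vdot w₀ (u i)) ^ 2)
        (fun i _ => sq_nonneg _) (Finset.mem_univ i0)
    rw [hsum1] at h1
    exact le_trans hinit h1
  have hx0 : (0:ℝ) < 4 / (α * ε) := by positivity
  have hlogpos : 0 < Real.log (4 / (α * ε)) := by
    apply Real.log_pos
    rw [lt_div_iff₀ (by positivity)]
    have h1 : α * ε ≤ 1 := mul_le_one₀ hα1 hε₀.le hε₁.le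
    linarith
  have htR : κ / 2 * Real.log (4 / (α * ε)) ≤ (t : ℝ) := le_trans (Int.le_ceil _) ht
  have ht1 : 1 ≤ t := by
    have h1 : (0:ℝ) < κ / 2 * Real.log (4 / (α * ε)) := by positivity
    have h2 : (0:ℝ) < (t : ℝ) := lt_of_lt_of_le h1 htR
    exact_mod_cast Nat.cast_pos.mp h2
  -- geometric sum / Gamma
  set G : ℝ := ∑ j ∈ Finset.range t, l1 ^ j with hGdef
  have hGpos : 0 < G := Finset.sum_pos (fun j _ => pow_pos hl1pos j)
    (Finset.nonempty_range_iff.mpr (by omega))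
  have hGamma : Gamma l1 ld t = 2 / ld ^ t * G := by
    unfold Gamma
    split_ifs with h
    · simp [hGdef, h]
    · rw [hGdef, geom_sum_eq h]
  have hGammapos : 0 < Gamma l1 ld t := by rw [hGamma]; exact mul_pos (div_pos two_pos (pow_pos hldpos t)) hGpos
  set δ₀ : ℝ := ε / (4 * Gamma l1 ld t) with hδ₀def
  have hδ₀pos : 0 < δ₀ := by positivity
  -- error accumulation
  have herr : ∀ s : ℕ, s ≤ t →
      evnorm (what s - (M ^ s).mulVec w₀) ≤ δ₀ * ∑ j ∈ Finset.range s, l1 ^ j := by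
    intro s
    induction s with
    | zero =>
      intro _
      simp [hhat₀, Matrix.one_mulVec, evnorm]
    | succ n ih =>
      intro hn
      have hn' : n < t := by omega
      have h1 := hhat' n hn'
      have key : what (n + 1) - (M ^ (n + 1)).mulVec w₀ =
          (what (n + 1) - M.mulVec (what n)) + M.mulVec (what n - (M ^ n).mulVec w₀) := by
        rw [Matrix.mulVec_sub, pow_succ', ← Matrix.mulVec_mulVec]
        abel
      calc evnorm (what (n + 1) - (M ^ (n + 1)).mulVec w₀)
          ≤ evnorm (what (n + 1) - M.mulVec (what n))
            + evnorm (M.mulVec (what n - (M ^ n).mulVec w₀)) := by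
            rw [key]; exact evnorm_add_le _ _
        _ ≤ δ₀ + l1 * (δ₀ * ∑ j ∈ Finset.range n, l1 ^ j) := by
            refine add_le_add h1 ?_
            exact le_trans (hMnorm _)
              (mul_le_mul_of_nonneg_left (ih (le_of_lt hn')) hl1pos.le)
        _ = δ₀ * ∑ j ∈ Finset.range (n + 1), l1 ^ j := by
            rw [geom_sum_succ]
            ring
  have hδG : δ₀ * G = ε * ld ^ t / 8 := by
    rw [hδ₀def, hGamma]
    field_simp
    ring
  have hδ : evnorm (what t - (M ^ t).mulVec w₀) ≤ ε * ld ^ t / 8 := by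
    have := herr t le_rfl
    rw [← hGdef, hδG] at this
    exact this
  -- norms R and W
  set W : ℝ := evnorm (what t) with hWdef
  have hWpos : 0 < W := evnorm_pos (hne t le_rfl)
  set R : ℝ := evnorm ((M ^ t).mulVec w₀) with hRdef
  have hRnn : 0 ≤ R := evnorm_nonneg _
  have hR2 : R ^ 2 = ∑ i, (lam i ^ t * vdot w₀ (u i)) ^ 2 := by
    rw [hRdef, hnormsq]
    exact Finset.sum_congr rfl (fun i _ => by rw [hpowcoord])
  have hRα : α * (l1 ^ t) ^ 2 ≤ R ^ 2 := by
    have h1 : (lam i0 ^ t * vdot w₀ (u i0)) ^ 2 ≤ ∑ i, (lam i ^ t * vdot w₀ (u i)) ^ 2 :=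
      Finset.single_le_sum (f := fun i => (lam i ^ t * vdot w₀ (u i)) ^ 2)
        (fun i _ => sq_nonneg _) (Finset.mem_univ i0)
    rw [hR2]
    calc α * (l1 ^ t) ^ 2 ≤ (vdot w₀ (u i0)) ^ 2 * (l1 ^ t) ^ 2 :=
          mul_le_mul_of_nonneg_right hinit (sq_nonneg _)
      _ = (lam i0 ^ t * vdot w₀ (u i0)) ^ 2 := by rw [hl1def]; ring
      _ ≤ _ := h1
  have hRld : (ld ^ t) ^ 2 ≤ R ^ 2 := by
    rw [hR2]
    calc (ld ^ t) ^ 2 = ∑ i, (ld ^ t) ^ 2 * (vdot w₀ (u i)) ^ 2 := by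
          rw [← Finset.mul_sum, hsum1, mul_one]
      _ ≤ ∑ i, (lam i ^ t * vdot w₀ (u i)) ^ 2 := by
          apply Finset.sum_le_sum; intro i _
          have h1 : ld ^ t ≤ lam i ^ t := pow_le_pow_left₀ hldpos.le (hldle i) t
          have h2 : (ld ^ t) ^ 2 ≤ (lam i ^ t) ^ 2 :=
            pow_le_pow_left₀ (pow_pos hldpos t).le h1 2
          calc (ld ^ t) ^ 2 * (vdot w₀ (u i)) ^ 2
              ≤ (lam i ^ t) ^ 2 * (vdot w₀ (u i)) ^ 2 :=
                mul_le_mul_of_nonneg_right h2 (sq_nonneg _)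
            _ = (lam i ^ t * vdot w₀ (u i)) ^ 2 := by ring
  have hldR : ld ^ t ≤ R := le_of_sq_le_sq' hRnn hRld (by positivity)
  have hWlow : (1 - ε / 8) * R ≤ W := by
    have h2 : (M ^ t).mulVec w₀ = what t + -(what t - (M ^ t).mulVec w₀) := by abel
    have h1 : R ≤ W + ε * ld ^ t / 8 :=
      calc R = evnorm (what t + -(what t - (M ^ t).mulVec w₀)) := by rw [hRdef, ← h2]
        _ ≤ W + evnorm (-(what t - (M ^ t).mulVec w₀)) := evnorm_add_le _ _
        _ ≤ W + ε * ld ^ t / 8 := by rw [evnorm_neg]; linarith [hδ]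
    have h3 : ε * ld ^ t ≤ ε * R := mul_le_mul_of_nonneg_left hldR hε₀.le
    linarith
  -- square roots
  set sε := Real.sqrt ε with hsεdef
  have hsε2 : sε ^ 2 = ε := Real.sq_sqrt hε₀.le
  have hsεpos : 0 < sε := Real.sqrt_pos.mpr hε₀
  have hsε1 : sε < 1 := by
    have h1 := Real.sqrt_lt_sqrt hε₀.le hε₁
    simpa [hsεdef] using h1
  set sα := Real.sqrt α with hsαdef
  have hsα2 : sα ^ 2 = α := Real.sq_sqrt hα.le
  have hsαpos : 0 < sα := Real.sqrt_pos.mpr hα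
  -- contraction bound
  have hexp : (1 - 1 / κ) ^ t ≤ sα * sε / 2 := by
    have h1 : 1 - 1 / κ ≤ Real.exp (-(1 / κ)) := by linarith [Real.add_one_le_exp (-(1 / κ))]
    have h2 : (1 - 1 / κ) ^ t ≤ Real.exp (-(1 / κ)) ^ t := pow_le_pow_left₀ h1κ h1 t
    have h3 : Real.exp (-(1 / κ)) ^ t = Real.exp (-((t : ℝ) / κ)) := by
      rw [← Real.exp_nat_mul]; congr 1; field_simp
    have hlog2 : Real.log (4 / (α * ε)) / 2 ≤ (t : ℝ) / κ := by
      rw [div_le_div_iff₀ (by norm_num) hκ0]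
      linarith [htR]
    have h4 : Real.sqrt (4 / (α * ε)) ≤ Real.exp ((t : ℝ) / κ) := by
      have h5 : Real.sqrt (4 / (α * ε)) = Real.exp (Real.log (4 / (α * ε)) / 2) := by
        rw [Real.sqrt_eq_rpow, Real.rpow_def_of_pos hx0]; ring_nf
      rw [h5]; exact Real.exp_le_exp.mpr hlog2
    have h6 : Real.sqrt (4 / (α * ε)) = 2 / (sα * sε) := by
      rw [Real.sqrt_div (by norm_num : (0:ℝ) ≤ 4), Real.sqrt_mul hα.le, hsεdef, hsαdef]
      congr 1
      rw [show (4 : ℝ) = 2 ^ 2 by norm_num, Real.sqrt_sq (by norm_num : (0:ℝ) ≤ 2)]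
    have h7 : Real.exp (-((t : ℝ) / κ)) ≤ sα * sε / 2 := by
      rw [Real.exp_neg]
      have h8 : 0 < 2 / (sα * sε) := by positivity
      calc (Real.exp ((t : ℝ) / κ))⁻¹ ≤ (2 / (sα * sε))⁻¹ := by
            apply inv_anti₀ h8; rw [← h6]; exact h4
        _ = sα * sε / 2 := by rw [inv_div]
    calc (1 - 1 / κ) ^ t ≤ Real.exp (-((t : ℝ) / κ)) := h3 ▸ h2
      _ ≤ sα * sε / 2 := h7
  have hβR : (1 - 1 / κ) ^ t * l1 ^ t ≤ sε / 2 * R := by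
    have h1 : sα * l1 ^ t ≤ R := by
      apply le_of_sq_le_sq' hRnn ?_ (by positivity)
      calc (sα * l1 ^ t) ^ 2 = α * (l1 ^ t) ^ 2 := by rw [mul_pow, hsα2]
        _ ≤ R ^ 2 := hRα
    calc (1 - 1 / κ) ^ t * l1 ^ t ≤ (sα * sε / 2) * l1 ^ t :=
          mul_le_mul_of_nonneg_right hexp (by positivity)
      _ = sε / 2 * (sα * l1 ^ t) := by ring
      _ ≤ sε / 2 * R := mul_le_mul_of_nonneg_left h1 (by positivity)
  -- the truncated vectors
  set a : Fin d → ℝ := fun i => vdot (what t) (u i) with hadef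
  set mS : Fin d → ℝ :=
    fun i => if lam i ≤ (1 - 1 / κ) * l1 then lam i ^ t * vdot w₀ (u i) else 0 with hmSdef
  set eS : Fin d → ℝ :=
    fun i => if lam i ≤ (1 - 1 / κ) * l1 then a i - lam i ^ t * vdot w₀ (u i) else 0 with heSdef
  set aS : Fin d → ℝ := fun i => if lam i ≤ (1 - 1 / κ) * l1 then a i else 0 with haSdef
  have haSsum : aS = mS + eS := by
    funext i
    simp only [Pi.add_apply, haSdef, hmSdef, heSdef]
    split_ifs with h
    · ring
    · simp
  have hmSle : evnorm mS ≤ (1 - 1 / κ) ^ t * l1 ^ t := by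
    apply le_of_sq_le_sq' (mul_nonneg (pow_nonneg h1κ t) (pow_pos hl1pos t).le) ?_
      (evnorm_nonneg _)
    rw [evnorm_sq]
    calc ∑ i, mS i ^ 2 ≤ ∑ i, ((1 - 1 / κ) ^ t * l1 ^ t) ^ 2 * (vdot w₀ (u i)) ^ 2 := by
          apply Finset.sum_le_sum; intro i _
          simp only [hmSdef]
          split_ifs with h
          · have h1 : lam i ^ t ≤ ((1 - 1 / κ) * l1) ^ t := pow_le_pow_left₀ (hpos i).le h t
            have h1' : (0:ℝ) ≤ lam i ^ t := pow_nonneg (hpos i).le t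
            have h2 : (lam i ^ t) ^ 2 ≤ (((1 - 1 / κ) * l1) ^ t) ^ 2 :=
              pow_le_pow_left₀ h1' h1 2
            have h3 : ((1 - 1 / κ) * l1) ^ t = (1 - 1 / κ) ^ t * l1 ^ t := mul_pow _ _ _
            calc (lam i ^ t * vdot w₀ (u i)) ^ 2
                = (lam i ^ t) ^ 2 * (vdot w₀ (u i)) ^ 2 := by ring
              _ ≤ (((1 - 1 / κ) * l1) ^ t) ^ 2 * (vdot w₀ (u i)) ^ 2 :=
                  mul_le_mul_of_nonneg_right h2 (sq_nonneg _)
              _ = ((1 - 1 / κ) ^ t * l1 ^ t) ^ 2 * (vdot w₀ (u i)) ^ 2 := by rw [h3]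
          · have h0 : (0:ℝ) ≤ ((1 - 1 / κ) ^ t * l1 ^ t) ^ 2 * (vdot w₀ (u i)) ^ 2 :=
              mul_nonneg (sq_nonneg _) (sq_nonneg _)
            simpa using h0
      _ = ((1 - 1 / κ) ^ t * l1 ^ t) ^ 2 := by rw [← Finset.mul_sum, hsum1, mul_one]
  have heSle : evnorm eS ≤ ε * ld ^ t / 8 := by
    apply le_of_sq_le_sq' (by positivity) ?_ (evnorm_nonneg _)
    have h1 : evnorm eS ^ 2 ≤ evnorm (what t - (M ^ t).mulVec w₀) ^ 2 := by
      rw [evnorm_sq, hnormsq]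
      apply Finset.sum_le_sum; intro i _
      rw [hvdot_sub, hpowcoord]
      simp only [heSdef]
      split_ifs with h
      · simp [hadef]
      · simpa using sq_nonneg (vdot (what t) (u i) - lam i ^ t * vdot w₀ (u i))
    exact le_trans h1 (pow_le_pow_left₀ (evnorm_nonneg _) hδ 2)
  have hN : evnorm aS ≤ sε * W := by
    have hcoef : sε / 2 + ε / 8 ≤ sε * (1 - ε / 8) := by
      have e1 : sε ^ 2 ≤ sε := by
        calc sε ^ 2 = sε * sε := sq sε
          _ ≤ 1 * sε := mul_le_mul_of_nonneg_right hsε1.le hsεpos.le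
          _ = sε := one_mul sε
      have e2 : sε ^ 3 ≤ sε ^ 2 := by
        calc sε ^ 3 = sε * sε ^ 2 := by ring
          _ ≤ 1 * sε ^ 2 := mul_le_mul_of_nonneg_right hsε1.le (sq_nonneg sε)
          _ = sε ^ 2 := one_mul _
      rw [← hsε2]
      have e3 : sε * (1 - sε ^ 2 / 8) = sε - sε ^ 3 / 8 := by ring
      rw [e3]
      linarith [hsεpos.le]
    calc evnorm aS ≤ evnorm mS + evnorm eS := by rw [haSsum]; exact evnorm_add_le _ _
      _ ≤ sε / 2 * R + ε / 8 * R := by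
          have h1 : ε * ld ^ t / 8 ≤ ε / 8 * R := by
            have h3 : ε * ld ^ t ≤ ε * R := mul_le_mul_of_nonneg_left hldR hε₀.le
            linarith
          linarith [le_trans hmSle hβR, heSle]
      _ = (sε / 2 + ε / 8) * R := by ring
      _ ≤ (sε * (1 - ε / 8)) * R := mul_le_mul_of_nonneg_right hcoef hRnn
      _ = sε * ((1 - ε / 8) * R) := by ring
      _ ≤ sε * W := mul_le_mul_of_nonneg_left hWlow hsεpos.le
  -- first goal
  have hkey : (∑ i ∈ Finset.univ.filter (fun i => lam i ≤ (1 - 1 / κ) * l1),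
      (vdot (W⁻¹ • what t) (u i)) ^ 2) ≤ ε := by
    have h3 : ∑ i ∈ Finset.univ.filter (fun i => lam i ≤ (1 - 1 / κ) * l1), a i ^ 2
        = evnorm aS ^ 2 := by
      rw [evnorm_sq, Finset.sum_filter]
      apply Finset.sum_congr rfl; intro i _
      by_cases h : lam i ≤ (1 - 1 / κ) * l1 <;> simp [haSdef, h]
    have h4 : evnorm aS ^ 2 ≤ ε * W ^ 2 := by
      calc evnorm aS ^ 2 ≤ (sε * W) ^ 2 := pow_le_pow_left₀ (evnorm_nonneg _) hN 2
        _ = ε * W ^ 2 := by rw [mul_pow, hsε2]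
    calc (∑ i ∈ Finset.univ.filter (fun i => lam i ≤ (1 - 1 / κ) * l1),
          (vdot (W⁻¹ • what t) (u i)) ^ 2)
        = ∑ i ∈ Finset.univ.filter (fun i => lam i ≤ (1 - 1 / κ) * l1), W⁻¹ ^ 2 * a i ^ 2 := by
          apply Finset.sum_congr rfl; intro i _
          rw [hvdot_smul]; ring
      _ = W⁻¹ ^ 2 * ∑ i ∈ Finset.univ.filter (fun i => lam i ≤ (1 - 1 / κ) * l1), a i ^ 2 := by
          rw [Finset.mul_sum]
      _ = W⁻¹ ^ 2 * evnorm aS ^ 2 := by rw [h3]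
      _ ≤ W⁻¹ ^ 2 * (ε * W ^ 2) := mul_le_mul_of_nonneg_left h4 (by positivity)
      _ = ε := by field_simp
  refine ⟨hkey, ?_⟩
  -- second goal
  have hb1 : ∑ i, (vdot (W⁻¹ • what t) (u i)) ^ 2 = 1 := by
    rw [← hnormsq, evnorm_smul, abs_of_pos (inv_pos.mpr hWpos)]
    field_simp; rfl
  have hquad : vdot (W⁻¹ • what t) (M.mulVec (W⁻¹ • what t))
      = ∑ i, lam i * (vdot (W⁻¹ • what t) (u i)) ^ 2 := by
    rw [hP (W⁻¹ • what t) (M.mulVec (W⁻¹ • what t))]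
    apply Finset.sum_congr rfl; intro i _
    rw [hMcoord]; ring
  have hsplit := Finset.sum_filter_add_sum_filter_not Finset.univ
    (fun i => lam i ≤ (1 - 1 / κ) * l1) (fun i => lam i * (vdot (W⁻¹ • what t) (u i)) ^ 2)
  have hsplit2 := Finset.sum_filter_add_sum_filter_not Finset.univ
    (fun i => lam i ≤ (1 - 1 / κ) * l1) (fun i => (vdot (W⁻¹ • what t) (u i)) ^ 2)
  have h5 : 0 ≤ ∑ i ∈ Finset.univ.filter (fun i => lam i ≤ (1 - 1 / κ) * l1),
      lam i * (vdot (W⁻¹ • what t) (u i)) ^ 2 :=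
    Finset.sum_nonneg fun i _ => mul_nonneg (hpos i).le (sq_nonneg _)
  have h8 : 1 - ε ≤ ∑ i ∈ Finset.univ.filter (fun i => ¬ lam i ≤ (1 - 1 / κ) * l1),
      (vdot (W⁻¹ • what t) (u i)) ^ 2 := by
    rw [hb1] at hsplit2
    linarith [hkey]
  have h6 : (1 - 1 / κ) * l1 * (∑ i ∈ Finset.univ.filter (fun i => ¬ lam i ≤ (1 - 1 / κ) * l1),
        (vdot (W⁻¹ • what t) (u i)) ^ 2)
      ≤ ∑ i ∈ Finset.univ.filter (fun i => ¬ lam i ≤ (1 - 1 / κ) * l1),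
        lam i * (vdot (W⁻¹ • what t) (u i)) ^ 2 := by
    rw [Finset.mul_sum]
    apply Finset.sum_le_sum; intro i hi
    rw [Finset.mem_filter] at hi
    have h7 := le_of_not_ge hi.2
    exact mul_le_mul_of_nonneg_right h7 (sq_nonneg _)
  have h9 : (1 - 1 / κ) * l1 * (1 - ε) ≤ (1 - 1 / κ) * l1
      * (∑ i ∈ Finset.univ.filter (fun i => ¬ lam i ≤ (1 - 1 / κ) * l1),
        (vdot (W⁻¹ • what t) (u i)) ^ 2) :=
    mul_le_mul_of_nonneg_left h8 (mul_nonneg h1κ hl1pos.le)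
  have h10 : (1 - 1 / κ - ε) * l1 ≤ (1 - 1 / κ) * l1 * (1 - ε) := by
    have h11 : (0:ℝ) ≤ ε * (1 / κ) * l1 :=
      mul_nonneg (mul_nonneg hε₀.le (by positivity)) hl1pos.le
    have h12 : (1 - 1 / κ) * l1 * (1 - ε) = (1 - 1 / κ - ε) * l1 + ε * (1 / κ) * l1 := by
      ring
    linarith
  rw [hquad, ← hsplit]
  linarith [h5, h6, h9, h10]
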